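/- Let E ⊆ S = k[X_0,…,X_{n−1}] be finite with a simple zero (a_0,…,a_{n−1}) ∈ k^n, and suppose that for some d the space V_{E,d} contains n linearly independent polynomials of degree at most 1. Then X_i − a_i ∈ V_{E,d} for every i = 0,…,n−1, and {X_0 − a_0, …, X_{n−1} − a_{n−1}} is the reduced Gröbner basis of the ideal (E) with respect to any term order on S. -/

import Mathlib

open MvPolynomial

/-- `V_{E,d}`: the smallest `k`-subspace of the polynomial ring containing every `f ∈ E`
of total degree at most `d` and closed under multiplication by ring elements
as long as the degree stays at most `d`. -/
noncomputable def Vspace {k : Type*} [Field k] {σ : Type*} (E : Finset (MvPolynomial σ k)) (d : ℕ) :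
    Submodule k (MvPolynomial σ k) :=
  sInf {W | (∀ f ∈ E, f.totalDegree ≤ d → f ∈ W) ∧
            ∀ g ∈ W, ∀ h : MvPolynomial σ k, (g * h).totalDegree ≤ d → g * h ∈ W}

/-- The leading exponent (exponent of the leading monomial) of a polynomial with respect to
a monomial order. -/
noncomputable def leadExp {k : Type*} [Field k] {σ : Type*} (m : MonomialOrder σ)
    (f : MvPolynomial σ k) : σ →₀ ℕ :=
  m.toSyn.symm (f.support.sup fun a => m.toSyn a)

/-- `G` is a Gröbner basis of the ideal `I` with respect to the monomial order `m`:
its elements lie in `I` and the leading monomial of every nonzero element of `I` is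
divisible by the leading monomial of some nonzero element of `G`. -/
def IsGroebnerBasis {k : Type*} [Field k] {σ : Type*} (m : MonomialOrder σ)
    (I : Ideal (MvPolynomial σ k)) (G : Set (MvPolynomial σ k)) : Prop :=
  (∀ g ∈ G, g ∈ I) ∧ ∀ f ∈ I, f ≠ 0 → ∃ g ∈ G, g ≠ 0 ∧ leadExp m g ≤ leadExp m f

/-- A monomial order is degree-compatible if it refines the total degree. -/
def DegreeCompatible {σ : Type*} (m : MonomialOrder σ) : Prop :=
  ∀ a b : σ →₀ ℕ, a.degree < b.degree → m.toSyn a < m.toSyn b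

/-- The solving degree of `E` with respect to `m`: the least `d` such that `V_{E,d}` contains
a Gröbner basis of the ideal generated by `E`. -/
noncomputable def solvingDegree {k : Type*} [Field k] {σ : Type*} (m : MonomialOrder σ)
    (E : Finset (MvPolynomial σ k)) : ℕ :=
  sInf {d | ∃ G : Set (MvPolynomial σ k), G ⊆ (Vspace E d : Set (MvPolynomial σ k)) ∧
      IsGroebnerBasis m (Ideal.span (E : Set (MvPolynomial σ k))) G}

/-- `G` is the reduced Gröbner basis of `I` w.r.t. `m`: it is a Gröbner basis, its elements
are monic, and no monomial of an element of `G` is divisible by the leading monomial of a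
different element of `G`. -/
def IsReducedGroebnerBasis {k : Type*} [Field k] {σ : Type*} (m : MonomialOrder σ)
    (I : Ideal (MvPolynomial σ k)) (G : Set (MvPolynomial σ k)) : Prop :=
  IsGroebnerBasis m I G ∧ (∀ g ∈ G, g.coeff (leadExp m g) = 1) ∧
    ∀ g ∈ G, ∀ g' ∈ G, g' ≠ g → ∀ a ∈ g.support, ¬ leadExp m g' ≤ a


lemma li_sub {k : Type*} [Field k] {n : ℕ} (a : Fin n → k) :
    LinearIndependent k (fun i : Fin n => (X i - C (a i) : MvPolynomial (Fin n) k)) := by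
  apply LinearIndependent.of_comp
    (LinearMap.pi (fun j : Fin n => MvPolynomial.lcoeff k (Finsupp.single j 1)))
  have heq : (LinearMap.pi (fun j : Fin n => MvPolynomial.lcoeff k (Finsupp.single j 1)))
      ∘ (fun i : Fin n => (X i - C (a i) : MvPolynomial (Fin n) k))
      = fun i => Pi.single i (1:k) := by
    funext i
    ext j
    have h0 : (Finsupp.single j 1 : Fin n →₀ ℕ) ≠ 0 := by
      simp [Finsupp.single_eq_zero]
    simp only [Function.comp_apply, LinearMap.pi_apply, lcoeff_apply, coeff_sub, coeff_C,
      MvPolynomial.coeff_X', if_neg (Ne.symm h0), sub_zero]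
    rcases eq_or_ne i j with rfl | h
    · simp
    · rw [if_neg (by simp [Finsupp.single_left_inj (one_ne_zero (α := ℕ))]; exact h),
        Pi.single_eq_of_ne (Ne.symm h)]
  rw [heq]
  have h2 : ⇑(Pi.basisFun k (Fin n)) = fun i : Fin n => Pi.single i (1:k) :=
    funext fun i => Pi.basisFun_apply k (Fin n) i
  rw [← h2]
  exact (Pi.basisFun k (Fin n)).linearIndependent


lemma exp_classify {n : ℕ} {m : Fin n →₀ ℕ} (hm : (m.sum fun _ e => e) ≤ 1) :
    m = 0 ∨ ∃ j, m = Finsupp.single j 1 := by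
  rcases eq_or_ne m 0 with h | h
  · exact Or.inl h
  right
  obtain ⟨j, hj⟩ : ∃ j, m j ≠ 0 := by
    by_contra hc
    push_neg at hc
    exact h (Finsupp.ext fun i => hc i)
  refine ⟨j, ?_⟩
  have hsum : (m.sum fun _ e => e) = ∑ i, m i := Finsupp.sum_fintype _ _ (fun _ => rfl)
  rw [hsum] at hm
  ext i
  rcases eq_or_ne i j with rfl | hij
  · have : m i ≤ ∑ x, m x := Finset.single_le_sum (fun x _ => Nat.zero_le _) (Finset.mem_univ i)
    simp only [Finsupp.single_eq_same]
    omega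
  · have hss : ∑ x ∈ ({i, j} : Finset (Fin n)), m x ≤ ∑ x, m x :=
      Finset.sum_le_sum_of_subset (Finset.subset_univ _)
    rw [Finset.sum_pair hij] at hss
    rw [Finsupp.single_eq_of_ne' (Ne.symm hij)]
    have hj1 : 1 ≤ m j := Nat.one_le_iff_ne_zero.mpr hj
    omega

lemma decomp_lin {k : Type*} [Field k] {n : ℕ}
    (p : MvPolynomial (Fin n) k) (hp : p.totalDegree ≤ 1) :
    p = C (coeff 0 p) + ∑ j, (coeff (Finsupp.single j 1) p) • (X j : MvPolynomial (Fin n) k) := by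
  have hsne : ∀ j : Fin n, (Finsupp.single j 1 : Fin n →₀ ℕ) ≠ 0 := by
    intro j; simp [Finsupp.single_eq_zero]
  ext m
  rw [coeff_add, coeff_C, coeff_sum]
  simp only [coeff_smul, coeff_X', smul_eq_mul]
  rcases eq_or_ne m 0 with rfl | hm0
  · rw [if_pos rfl, Finset.sum_eq_zero, add_zero]
    intro j _
    rw [if_neg (hsne j), mul_zero]
  · rw [if_neg (Ne.symm hm0), zero_add]
    by_cases hm1 : ∃ j, m = Finsupp.single j 1
    · obtain ⟨j, rfl⟩ := hm1
      rw [Finset.sum_eq_single j]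
      · rw [if_pos rfl, mul_one]
      · intro j' _ hj'
        rw [if_neg, mul_zero]
        simp [Finsupp.single_left_inj (one_ne_zero (α := ℕ))]
        exact hj'
      · intro h; exact absurd (Finset.mem_univ j) h
    · have hc : coeff m p = 0 := by
        by_contra hc
        have hmem : m ∈ p.support := mem_support_iff.mpr hc
        have hle : (m.sum fun _ e => e) ≤ p.totalDegree := le_totalDegree hmem
        rcases exp_classify (le_trans hle hp) with h | h
        · exact hm0 h
        · exact hm1 h
      rw [hc, Finset.sum_eq_zero]
      intro j _
      rw [if_neg (fun h => hm1 ⟨j, h.symm⟩), mul_zero]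

lemma mem_span_lin {k : Type*} [Field k] {n : ℕ} (a : Fin n → k)
    (p : MvPolynomial (Fin n) k) (hp : p.totalDegree ≤ 1) (h0 : aeval a p = 0) :
    p ∈ Submodule.span k
      (Set.range fun j : Fin n => (X j - C (a j) : MvPolynomial (Fin n) k)) := by
  have hdec := decomp_lin p hp
  have heval : coeff 0 p + ∑ j, coeff (Finsupp.single j 1) p * a j = 0 := by
    have := h0
    conv_lhs at this => rw [hdec]
    simpa [map_sum, smul_eq_mul] using this
  have hrepr : p = ∑ j, (coeff (Finsupp.single j 1) p) •
      (X j - C (a j) : MvPolynomial (Fin n) k) := by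
    have h1 : ∑ j, (coeff (Finsupp.single j 1) p) • (X j - C (a j) : MvPolynomial (Fin n) k)
        = (∑ j, (coeff (Finsupp.single j 1) p) • (X j : MvPolynomial (Fin n) k))
          - C (∑ j, coeff (Finsupp.single j 1) p * a j) := by
      rw [map_sum, ← Finset.sum_sub_distrib]
      apply Finset.sum_congr rfl
      intro j _
      rw [smul_sub]
      congr 1
      rw [smul_eq_C_mul, ← C_mul]
    have h2 : (∑ j, coeff (Finsupp.single j 1) p * a j) = - coeff 0 p := by
      linear_combination heval
    rw [h1, h2, map_neg, sub_neg_eq_add]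
    conv_lhs => rw [hdec]
    ring
  rw [hrepr]
  exact Submodule.sum_mem _ fun j _ =>
    Submodule.smul_mem _ _ (Submodule.subset_span (Set.mem_range_self j))

lemma coeff_single_sub {k : Type*} [Field k] {n : ℕ} (i : Fin n) (c : k) :
    coeff (Finsupp.single i 1) (X i - C c : MvPolynomial (Fin n) k) = 1 := by
  rw [coeff_sub, coeff_C, coeff_X', if_pos rfl,
    if_neg (fun h => by simpa [Finsupp.single_eq_zero] using h.symm), sub_zero]

lemma sub_ne_zero' {k : Type*} [Field k] {n : ℕ} (i : Fin n) (c : k) :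
    (X i - C c : MvPolynomial (Fin n) k) ≠ 0 := by
  intro h
  have := coeff_single_sub i c
  rw [h, coeff_zero] at this
  exact one_ne_zero this.symm

lemma support_sub_subset {k : Type*} [Field k] {n : ℕ} (i : Fin n) (c : k) :
    (X i - C c : MvPolynomial (Fin n) k).support ⊆ {Finsupp.single i 1, 0} := by
  classical
  refine subset_trans (MvPolynomial.support_sub _ _ _) ?_
  intro b hb
  rcases Finset.mem_union.mp hb with h | h
  · rw [support_X] at h
    exact Finset.mem_insert.mpr (Or.inl (Finset.mem_singleton.mp h))
  · have hC : (C c : MvPolynomial (Fin n) k).support ⊆ {0} := by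
      rw [C_apply]; exact support_monomial_subset
    exact Finset.mem_insert.mpr (Or.inr (hC h))

lemma leadExp_sub {k : Type*} [Field k] {n : ℕ} (m : MonomialOrder (Fin n)) (i : Fin n) (c : k) :
    leadExp m (X i - C c : MvPolynomial (Fin n) k) = Finsupp.single i 1 := by
  have hmem : Finsupp.single i 1 ∈ (X i - C c : MvPolynomial (Fin n) k).support :=
    mem_support_iff.mpr (by rw [coeff_single_sub]; exact one_ne_zero)
  have hsup : ((X i - C c : MvPolynomial (Fin n) k).support.sup fun a => m.toSyn a)
      = m.toSyn (Finsupp.single i 1) := by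
    apply le_antisymm
    · apply Finset.sup_le
      intro b hb
      rcases Finset.mem_insert.mp (support_sub_subset i c hb) with rfl | h
      · exact le_refl _
      · rw [Finset.mem_singleton.mp h]
        exact m.toSyn_monotone zero_le
    · exact Finset.le_sup hmem
  rw [leadExp, hsup, AddEquiv.symm_apply_apply]

/-- If `E` has a simple zero `a ∈ k^n` and `V_{E,d}` contains `n` linearly independent
polynomials of degree at most one, then `X_i - a_i ∈ V_{E,d}` for all `i`, and
`{X_0 - a_0, …, X_{n-1} - a_{n-1}}` is the reduced Gröbner basis of `(E)` with respect to
any monomial order. -/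

theorem linear_forms_in_Vspace_of_simple_zero {k : Type*} [Field k] {n : ℕ}
    (E : Finset (MvPolynomial (Fin n) k)) (a : Fin n → k)
    (hrad : (Ideal.span (E : Set (MvPolynomial (Fin n) k))).IsRadical)
    (hzero : ∀ f ∈ E, MvPolynomial.aeval (fun i => algebraMap k (AlgebraicClosure k) (a i)) f = 0)
    (huniq : ∀ a' : Fin n → AlgebraicClosure k, (∀ f ∈ E, MvPolynomial.aeval a' f = 0) →
      a' = fun i => algebraMap k (AlgebraicClosure k) (a i))
    (d : ℕ) (g : Fin n → MvPolynomial (Fin n) k)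
    (hgV : ∀ i, g i ∈ Vspace E d) (hgdeg : ∀ i, (g i).totalDegree ≤ 1)
    (hgli : LinearIndependent k g) :
    (∀ i, X i - C (a i) ∈ Vspace E d) ∧
    ∀ m : MonomialOrder (Fin n),
      IsReducedGroebnerBasis m (Ideal.span (E : Set (MvPolynomial (Fin n) k)))
        (Set.range fun i : Fin n => X i - C (a i)) := by
  classical
  set I : Ideal (MvPolynomial (Fin n) k) := Ideal.span (E : Set (MvPolynomial (Fin n) k)) with hI
  -- every f ∈ E vanishes at a (over k)
  have hzero' : ∀ f ∈ E, aeval a f = 0 := by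
    intro f hf
    have hinj : Function.Injective (algebraMap k (AlgebraicClosure k)) :=
      (algebraMap k (AlgebraicClosure k)).injective
    have := hzero f hf
    rw [show (fun i => algebraMap k (AlgebraicClosure k) (a i))
        = (algebraMap k (AlgebraicClosure k)) ∘ a from rfl] at this
    exact (aeval_algebraMap_eq_zero_iff_of_injective (B := AlgebraicClosure k) hinj).mp this
  -- I is contained in the kernel of evaluation at a
  have hIker : ∀ f ∈ I, aeval a f = 0 := by
    intro f hf
    have hle : I ≤ RingHom.ker (aeval a : MvPolynomial (Fin n) k →ₐ[k] k).toRingHom := by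
      rw [hI, Ideal.span_le]
      intro q hq
      exact hzero' q hq
    exact hle hf
  -- Vspace is contained in I
  have hVI : Vspace E d ≤ Submodule.restrictScalars k I := by
    apply sInf_le
    refine ⟨fun f hf _ => Ideal.subset_span hf, fun q hq h _ => Ideal.mul_mem_right h _ hq⟩
  -- the linear forms
  set b : Fin n → MvPolynomial (Fin n) k := fun j => X j - C (a j) with hbdef
  have hli : LinearIndependent k b := li_sub a
  set W : Submodule k (MvPolynomial (Fin n) k) := Submodule.span k (Set.range b) with hW
  have hfd : FiniteDimensional k W := FiniteDimensional.span_of_finite k (Set.finite_range b)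
  have hrank : Module.finrank k W = n := by
    rw [hW, finrank_span_eq_card hli, Fintype.card_fin]
  -- each g i lies in W
  have hgI : ∀ i, g i ∈ I := fun i => hVI (hgV i)
  have hgW : ∀ i, g i ∈ W := by
    intro i
    exact mem_span_lin a (g i) (hgdeg i) (hIker _ (hgI i))
  set g' : Fin n → W := fun i => ⟨g i, hgW i⟩ with hg'
  have hli' : LinearIndependent k g' := by
    apply LinearIndependent.of_comp W.subtype
    exact hgli
  have htop : Submodule.span k (Set.range g') = ⊤ :=
    hli'.span_eq_top_of_card_eq_finrank' (by rw [Fintype.card_fin, hrank])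
  -- each b j lies in the span of g
  have hbg : ∀ j, b j ∈ Submodule.span k (Set.range g) := by
    intro j
    have h1 : (⟨b j, Submodule.subset_span (Set.mem_range_self j)⟩ : W)
        ∈ Submodule.span k (Set.range g') := by rw [htop]; trivial
    have h2 : b j ∈ Submodule.map W.subtype (Submodule.span k (Set.range g')) :=
      ⟨_, h1, rfl⟩
    rw [Submodule.map_span, ← Set.range_comp] at h2
    exact h2
  have hspanV : Submodule.span k (Set.range g) ≤ Vspace E d :=
    Submodule.span_le.mpr (by rintro _ ⟨i, rfl⟩; exact hgV i)
  have hspanI : Submodule.span k (Set.range g) ≤ Submodule.restrictScalars k I :=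
    Submodule.span_le.mpr (by rintro _ ⟨i, rfl⟩; exact hgI i)
  have hbV : ∀ j, b j ∈ Vspace E d := fun j => hspanV (hbg j)
  have hbI : ∀ j, b j ∈ I := fun j => hspanI (hbg j)
  refine ⟨hbV, ?_⟩
  intro m
  refine ⟨⟨?_, ?_⟩, ?_, ?_⟩
  · rintro q ⟨i, rfl⟩
    exact hbI i
  · -- every nonzero element of I has leading exponent divisible by some X j
    intro f hf hf0
    have hsupne : f.support.Nonempty := by
      rw [Finset.nonempty_iff_ne_empty, Ne, MvPolynomial.support_eq_empty]
      exact hf0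
    have hlne : leadExp m f ≠ 0 := by
      intro hlz
      have hsup0 : (f.support.sup fun e => m.toSyn e) = m.toSyn 0 := by
        have := congrArg m.toSyn hlz
        rw [leadExp, AddEquiv.apply_symm_apply] at this
        rw [this]
      have hsub : f.support ⊆ {0} := by
        intro e he
        have h1 : m.toSyn e ≤ m.toSyn 0 := hsup0 ▸ Finset.le_sup he
        have h2 : m.toSyn 0 ≤ m.toSyn e := m.toSyn_monotone zero_le
        have : m.toSyn e = m.toSyn 0 := le_antisymm h1 h2
        exact Finset.mem_singleton.mpr (m.toSyn.injective this)
      have hfC : f = C (coeff 0 f) := by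
        ext e
        rcases eq_or_ne e 0 with rfl | he
        · simp
        · rw [coeff_C, if_neg (Ne.symm he)]
          by_contra hc
          exact he (Finset.mem_singleton.mp (hsub (mem_support_iff.mpr hc)))
      have : coeff 0 f = 0 := by
        have := hIker f hf
        rw [hfC] at this
        simpa using this
      rw [hfC, this, map_zero] at hf0
      exact hf0 rfl
    obtain ⟨j, hj⟩ : ∃ j, leadExp m f j ≠ 0 := by
      by_contra hc
      push_neg at hc
      exact hlne (Finsupp.ext fun i => hc i)
    refine ⟨b j, Set.mem_range_self j, sub_ne_zero' j (a j), ?_⟩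
    rw [hbdef, leadExp_sub]
    exact Finsupp.single_le_iff.mpr (Nat.one_le_iff_ne_zero.mpr hj)
  · rintro q ⟨i, rfl⟩
    rw [leadExp_sub, coeff_single_sub]
  · rintro q ⟨i, rfl⟩ q' ⟨j, rfl⟩ hne e he hle
    have hij : j ≠ i := by
      rintro rfl
      exact hne rfl
    rw [leadExp_sub] at hle
    rcases Finset.mem_insert.mp (support_sub_subset i (a i) he) with rfl | h
    · have := Finsupp.single_le_iff.mp hle
      rw [Finsupp.single_eq_of_ne' (Ne.symm hij)] at this
      omega
    · rw [Finset.mem_singleton.mp h] at hle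
      have := Finsupp.single_le_iff.mp hle
      simp at this
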